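/- Let n ≥ 1, let φ_1,…,φ_n be the hat functions on [0,1], let g : [0,1] → ℝ be continuous, and suppose ω ≥ 0 satisfies |g(x) − g(y)| ≤ ω for all x, y ∈ [0,1] with |x − y| ≤ 2/(n+1). Let K_n(g) be the n×n matrix with (K_n(g))_{ij} = ∫₀¹ g(x) φ_j'(x) φ_i'(x) dx and let D_n(g) = diag(g(1/n),…,g(n/n)). Then: (i) |(K_n(g))_{ij} − g(i/n)·(K_n(1))_{ij}| ≤ 2(n+1)·ω for all i, j; (ii) the matrix Y_n = (1/(n+1))·(K_n(g) − D_n(g)·K_n(1)) is tridiagonal and its spectral (operator 2-) norm satisfies ‖Y_n‖ ≤ 6ω. -/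

import Mathlib

open MeasureTheory intervalIntegral

/-- The hat function `φ_i` on `[0,1]` for the uniform grid `x_i = i/(n+1)`. -/
noncomputable def hat (n i : ℕ) (x : ℝ) : ℝ :=
  if x ∈ Set.Ico (((i : ℝ) - 1) * (1 / ((n : ℝ) + 1))) ((i : ℝ) * (1 / ((n : ℝ) + 1))) then
    (x - ((i : ℝ) - 1) * (1 / ((n : ℝ) + 1))) / (1 / ((n : ℝ) + 1))
  else if x ∈ Set.Ico ((i : ℝ) * (1 / ((n : ℝ) + 1))) (((i : ℝ) + 1) * (1 / ((n : ℝ) + 1))) then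
    (((i : ℝ) + 1) * (1 / ((n : ℝ) + 1)) - x) / (1 / ((n : ℝ) + 1))
  else 0

/-- The (weak) derivative of the hat function `φ_i`. -/
noncomputable def hatDeriv (n i : ℕ) (x : ℝ) : ℝ :=
  if x ∈ Set.Ioo (((i : ℝ) - 1) * (1 / ((n : ℝ) + 1))) ((i : ℝ) * (1 / ((n : ℝ) + 1))) then
    (n : ℝ) + 1
  else if x ∈ Set.Ioo ((i : ℝ) * (1 / ((n : ℝ) + 1))) (((i : ℝ) + 1) * (1 / ((n : ℝ) + 1))) then
    -((n : ℝ) + 1)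
  else 0

/-- The FE stiffness matrix with weight `g`: `(K_n(g))_{ij} = ∫₀¹ g φ_j' φ_i'`. -/
noncomputable def Kmat (n : ℕ) (g : ℝ → ℝ) : Matrix (Fin n) (Fin n) ℝ :=
  Matrix.of fun i j =>
    ∫ x in (0 : ℝ)..1, g x * hatDeriv n ((j : ℕ) + 1) x * hatDeriv n ((i : ℕ) + 1) x

/-- The spectral norm (operator norm induced by the Euclidean vector norm) of a real
square matrix. -/
noncomputable def opNorm {n : ℕ} (M : Matrix (Fin n) (Fin n) ℝ) : ℝ :=
  ‖LinearMap.toContinuousLinearMap (Matrix.toEuclideanLin M)‖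

/-- If `g` is continuous on `[0,1]` with oscillation at most `ω` over distances `≤ 2/(n+1)`,
then (i) `|(K_n(g))_{ij} − g(i/n)(K_n(1))_{ij}| ≤ 2(n+1)ω` for all `i,j`, and (ii) the matrix
`Y_n = (1/(n+1))(K_n(g) − D_n(g)K_n(1))` is tridiagonal with spectral norm `‖Y_n‖ ≤ 6ω`. -/
lemma schur_opNorm {n : ℕ} (M : Matrix (Fin n) (Fin n) ℝ) (C : ℝ) (hC : 0 ≤ C)
    (hrow : ∀ i, ∑ j, |M i j| ≤ C) (hcol : ∀ j, ∑ i, |M i j| ≤ C) :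
    opNorm M ≤ C := by
  apply ContinuousLinearMap.opNorm_le_bound _ hC
  intro x
  have hx : ∀ i, (WithLp.equiv 2 (Fin n → ℝ)) x i = x i := fun i => rfl
  have key : ∑ i, (∑ j, M i j * x j) ^ 2 ≤ C ^ 2 * ∑ j, (x j) ^ 2 := by
    have step1 : ∀ i, (∑ j, M i j * x j) ^ 2 ≤ C * ∑ j, |M i j| * (x j) ^ 2 := by
      intro i
      have h1 : (∑ j, M i j * x j) ^ 2 ≤ (∑ j, |M i j| * |x j|) ^ 2 := by
        have : |∑ j, M i j * x j| ≤ ∑ j, |M i j| * |x j| := by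
          refine (Finset.abs_sum_le_sum_abs _ _).trans ?_
          simp [abs_mul, le_refl]
        calc (∑ j, M i j * x j) ^ 2 = |∑ j, M i j * x j| ^ 2 := (sq_abs _).symm
          _ ≤ (∑ j, |M i j| * |x j|) ^ 2 := by
              apply pow_le_pow_left₀ (abs_nonneg _) this
      have h2 : (∑ j, |M i j| * |x j|) ^ 2 ≤ (∑ j, |M i j|) * ∑ j, |M i j| * (x j) ^ 2 := by
        have := Finset.sum_mul_sq_le_sq_mul_sq Finset.univ
          (fun j => Real.sqrt |M i j|) (fun j => Real.sqrt |M i j| * |x j|)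
        calc (∑ j, |M i j| * |x j|) ^ 2
            = (∑ j, Real.sqrt |M i j| * (Real.sqrt |M i j| * |x j|)) ^ 2 := by
              congr 1; apply Finset.sum_congr rfl; intro j _
              rw [← mul_assoc, Real.mul_self_sqrt (abs_nonneg _)]
          _ ≤ (∑ j, Real.sqrt |M i j| ^ 2) * ∑ j, (Real.sqrt |M i j| * |x j|) ^ 2 := this
          _ = (∑ j, |M i j|) * ∑ j, |M i j| * (x j) ^ 2 := by
              congr 1
              · apply Finset.sum_congr rfl; intro j _; exact Real.sq_sqrt (abs_nonneg _)
              · apply Finset.sum_congr rfl; intro j _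
                rw [mul_pow, Real.sq_sqrt (abs_nonneg _), sq_abs]
      refine h1.trans (h2.trans ?_)
      apply mul_le_mul_of_nonneg_right (hrow i)
      positivity
    calc ∑ i, (∑ j, M i j * x j) ^ 2 ≤ ∑ i, (C * ∑ j, |M i j| * (x j) ^ 2) :=
          Finset.sum_le_sum fun i _ => step1 i
      _ = C * ∑ j, (∑ i, |M i j|) * (x j) ^ 2 := by
          rw [← Finset.mul_sum]; congr 1
          rw [Finset.sum_comm]
          apply Finset.sum_congr rfl; intro j _; rw [Finset.sum_mul]
      _ ≤ C * ∑ j, C * (x j) ^ 2 := by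
          apply mul_le_mul_of_nonneg_left _ hC
          apply Finset.sum_le_sum; intro j _
          exact mul_le_mul_of_nonneg_right (hcol j) (sq_nonneg _)
      _ = C ^ 2 * ∑ j, (x j) ^ 2 := by rw [← Finset.mul_sum]; ring
  rw [EuclideanSpace.norm_eq, EuclideanSpace.norm_eq]
  have : ∀ i, ‖(LinearMap.toContinuousLinearMap (Matrix.toEuclideanLin M)) x i‖ ^ 2
      = (∑ j, M i j * x j) ^ 2 := by
    intro i
    rw [Real.norm_eq_abs, sq_abs]
    rfl
  calc Real.sqrt (∑ i, ‖(LinearMap.toContinuousLinearMap (Matrix.toEuclideanLin M)) x i‖ ^ 2)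
      = Real.sqrt (∑ i, (∑ j, M i j * x j) ^ 2) := by
        congr 1; exact Finset.sum_congr rfl fun i _ => this i
    _ ≤ Real.sqrt (C ^ 2 * ∑ j, (x j) ^ 2) := Real.sqrt_le_sqrt key
    _ = C * Real.sqrt (∑ j, ‖x j‖ ^ 2) := by
        rw [Real.sqrt_mul (sq_nonneg C), Real.sqrt_sq hC]
        congr 2
        exact Finset.sum_congr rfl fun j _ => by rw [Real.norm_eq_abs, sq_abs]

lemma hatDeriv_measurable (n k : ℕ) : Measurable (hatDeriv n k) := by
  unfold hatDeriv
  exact (measurable_const.ite measurableSet_Ioo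
    (measurable_const.ite measurableSet_Ioo measurable_const))

lemma hatDeriv_abs_le (n k : ℕ) (x : ℝ) : |hatDeriv n k x| ≤ (n : ℝ) + 1 := by
  unfold hatDeriv
  have : (0:ℝ) ≤ (n:ℝ) + 1 := by positivity
  split_ifs
  · rw [abs_of_nonneg this]
  · rw [abs_neg, abs_of_nonneg this]
  · simpa using this

lemma hatDeriv_support {n k : ℕ} {x : ℝ} (h : hatDeriv n k x ≠ 0) :
    ((k : ℝ) - 1) * (1 / ((n : ℝ) + 1)) < x ∧ x < ((k : ℝ) + 1) * (1 / ((n : ℝ) + 1)) := by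
  have hp : (0:ℝ) < 1 / ((n : ℝ) + 1) := by positivity
  unfold hatDeriv at h
  split_ifs at h with h1 h2
  · exact ⟨h1.1, h1.2.trans_le (by nlinarith)⟩
  · exact ⟨lt_of_le_of_lt (by nlinarith) h2.1, h2.2⟩
  · simp at h

lemma hatDeriv_mul_eq_zero {n k k' : ℕ} (h : k' + 2 ≤ k) (x : ℝ) :
    hatDeriv n k' x * hatDeriv n k x = 0 := by
  by_cases h' : hatDeriv n k' x = 0
  · rw [h', zero_mul]
  by_cases h'' : hatDeriv n k x = 0
  · rw [h'', mul_zero]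
  exfalso
  have hp : (0:ℝ) < 1 / ((n : ℝ) + 1) := by positivity
  have h1 := (hatDeriv_support h').2
  have h2 := (hatDeriv_support h'').1
  have : ((k':ℝ) + 1) ≤ (k:ℝ) - 1 := by
    have : ((k':ℝ)) + 2 ≤ (k:ℝ) := by exact_mod_cast h
    linarith
  nlinarith

lemma core (n : ℕ) (hn : 1 ≤ n) (g : ℝ → ℝ) (hg : ContinuousOn g (Set.Icc 0 1))
    (ω : ℝ) (hω : 0 ≤ ω)
    (hgω : ∀ x ∈ Set.Icc (0 : ℝ) 1, ∀ y ∈ Set.Icc (0 : ℝ) 1,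
      |x - y| ≤ 2 / ((n : ℝ) + 1) → |g x - g y| ≤ ω) (i j : Fin n) :
    |Kmat n g i j - g ((((i : ℕ) : ℝ) + 1) / (n : ℝ)) * Kmat n (fun _ => 1) i j| ≤
      2 * ((n : ℝ) + 1) * ω := by
  have hN : (0:ℝ) < (n:ℝ) := by exact_mod_cast hn.trans_lt' (by norm_num)
  have hN1 : (0:ℝ) < (n:ℝ) + 1 := by linarith
  have hhpos : (0:ℝ) < 1 / ((n:ℝ) + 1) := by positivity
  set I : ℝ := ((i : ℕ) : ℝ) with hI
  have hI0 : 0 ≤ I := by positivity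
  have hIn : I + 1 ≤ (n:ℝ) := by
    have := i.isLt
    rw [hI]; exact_mod_cast this
  set c : ℝ := g ((I + 1) / (n : ℝ)) with hc
  set ψj : ℝ → ℝ := hatDeriv n ((j : ℕ) + 1) with hψjdef
  set ψi : ℝ → ℝ := hatDeriv n ((i : ℕ) + 1) with hψidef
  set F : ℝ → ℝ := fun x => (g x - c) * (ψj x * ψi x) with hF
  set a : ℝ := I * (1 / ((n:ℝ) + 1)) with ha
  set b : ℝ := (I + 2) * (1 / ((n:ℝ) + 1)) with hb
  have ha0 : 0 ≤ a := by rw [ha]; positivity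
  have hab : a ≤ b := by
    rw [ha, hb]; apply mul_le_mul_of_nonneg_right (by linarith) (le_of_lt hhpos)
  have hub : ((n:ℝ) + 1) * (1 / ((n:ℝ) + 1)) = 1 := by field_simp
  have hb1 : b ≤ 1 := by
    have hb' : b ≤ ((n:ℝ)+1) * (1 / ((n:ℝ)+1)) := by
      rw [hb]
      apply mul_le_mul_of_nonneg_right (by linarith) (le_of_lt hhpos)
    linarith
  -- support of ψi
  have hsupp_i : ∀ x : ℝ, ψi x ≠ 0 → a < x ∧ x < b := by
    intro x hx
    obtain ⟨h1, h2⟩ := hatDeriv_support hx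
    have c1 : (((i : ℕ) + 1 : ℕ) : ℝ) - 1 = I := by push_cast; ring
    have c2 : (((i : ℕ) + 1 : ℕ) : ℝ) + 1 = I + 2 := by push_cast; ring
    rw [c1] at h1; rw [c2] at h2
    exact ⟨h1, h2⟩
  have hz_left : ∀ x : ℝ, x ≤ a → ψi x = 0 := by
    intro x hx
    by_contra h
    exact absurd (hsupp_i x h).1 (not_lt.2 hx)
  have hz_right : ∀ x : ℝ, b ≤ x → ψi x = 0 := by
    intro x hx
    by_contra h
    exact absurd (hsupp_i x h).2 (not_lt.2 hx)
  -- sampling point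
  have hcpt : (I + 1) / (n:ℝ) ∈ Set.Icc (0:ℝ) 1 := by
    constructor
    · positivity
    · rw [div_le_one hN]; linarith
  have hc1 : (I + 1) * (1 / ((n:ℝ) + 1)) ≤ (I + 1) / (n:ℝ) := by
    rw [mul_one_div, div_le_div_iff₀ hN1 hN]; nlinarith
  have hc2 : (I + 1) / (n:ℝ) ≤ b := by
    rw [hb, mul_one_div, div_le_div_iff₀ hN hN1]; nlinarith
  -- pointwise bound on F
  have hFb : ∀ x ∈ Set.Icc (0:ℝ) 1, |F x| ≤ ω * (((n:ℝ)+1) * ((n:ℝ)+1)) := by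
    intro x hx
    by_cases h0 : ψj x * ψi x = 0
    · rw [hF]; simp only [h0, mul_zero, abs_zero]; positivity
    · have hi0 : ψi x ≠ 0 := fun h => h0 (by rw [h, mul_zero])
      obtain ⟨hl, hr⟩ := hsupp_i x hi0
      have e1 : (I:ℝ) * (1/((n:ℝ)+1)) - (I+2) * (1/((n:ℝ)+1)) = -(2 * (1/((n:ℝ)+1))) := by ring
      have e2 : ((I:ℝ)+2) * (1/((n:ℝ)+1)) - (I+1) * (1/((n:ℝ)+1)) = 1/((n:ℝ)+1) := by ring
      have e3 : (2:ℝ) * (1/((n:ℝ)+1)) = 2 / ((n:ℝ)+1) := by ring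
      have hdist : |x - (I + 1) / (n:ℝ)| ≤ 2 / ((n:ℝ) + 1) := by
        rw [abs_le]
        rw [ha] at hl; rw [hb] at hr
        constructor
        · linarith
        · linarith
      have hgb := hgω x hx _ hcpt hdist
      rw [hF]
      simp only []
      rw [abs_mul, abs_mul]
      exact mul_le_mul hgb (mul_le_mul (hatDeriv_abs_le n _ x) (hatDeriv_abs_le n _ x)
        (abs_nonneg _) (by positivity)) (by positivity) hω
  -- measurability and integrability
  have hψj_m := hatDeriv_measurable n ((j : ℕ) + 1)
  have hψi_m := hatDeriv_measurable n ((i : ℕ) + 1)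
  have hgae : AEMeasurable g (volume.restrict (Set.Ioc (0:ℝ) 1)) :=
    (hg.aemeasurable measurableSet_Icc).mono_measure
      (Measure.restrict_mono Set.Ioc_subset_Icc_self le_rfl)
  have hFmeas : AEStronglyMeasurable F (volume.restrict (Set.Ioc (0:ℝ) 1)) := by
    rw [hF]
    exact ((hgae.sub aemeasurable_const).mul
      ((hψj_m.mul hψi_m).aemeasurable)).aestronglyMeasurable
  have hF_int : IntervalIntegrable F volume 0 1 := by
    rw [intervalIntegrable_iff_integrableOn_Ioc_of_le zero_le_one]
    apply Integrable.mono' (integrable_const (ω * (((n:ℝ)+1) * ((n:ℝ)+1)))) hFmeas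
    refine (ae_restrict_iff' measurableSet_Ioc).2 (ae_of_all _ fun x hx => ?_)
    rw [Real.norm_eq_abs]
    exact hFb x (Set.Ioc_subset_Icc_self hx)
  have hψψ_int : IntervalIntegrable (fun x => ψj x * ψi x) volume 0 1 := by
    rw [intervalIntegrable_iff_integrableOn_Ioc_of_le zero_le_one]
    apply Integrable.mono' (integrable_const (((n:ℝ)+1) * ((n:ℝ)+1)))
      ((hψj_m.mul hψi_m).aestronglyMeasurable.restrict)
    apply ae_of_all
    intro x
    rw [Real.norm_eq_abs, Pi.mul_apply, abs_mul]
    exact mul_le_mul (hatDeriv_abs_le n _ x) (hatDeriv_abs_le n _ x)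
      (abs_nonneg _) (by positivity)
  -- identity
  have hKg : Kmat n g i j = (∫ x in (0:ℝ)..1, F x) + c * ∫ x in (0:ℝ)..1, ψj x * ψi x := by
    have e : (∫ x in (0:ℝ)..1, g x * hatDeriv n ((j:ℕ)+1) x * hatDeriv n ((i:ℕ)+1) x)
        = ∫ x in (0:ℝ)..1, (F x + c * (ψj x * ψi x)) := by
      apply intervalIntegral.integral_congr
      intro x _
      rw [hF]; simp only [hψjdef, hψidef]; ring
    rw [Kmat, Matrix.of_apply, e, intervalIntegral.integral_add hF_int (hψψ_int.const_mul c),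
      intervalIntegral.integral_const_mul]
  have hK1 : Kmat n (fun _ => (1:ℝ)) i j = ∫ x in (0:ℝ)..1, ψj x * ψi x := by
    rw [Kmat, Matrix.of_apply]
    apply intervalIntegral.integral_congr
    intro x _
    simp only [one_mul]
    rfl
  rw [hKg, hK1]
  have hgoal : (∫ x in (0:ℝ)..1, F x) + c * (∫ x in (0:ℝ)..1, ψj x * ψi x)
      - c * (∫ x in (0:ℝ)..1, ψj x * ψi x) = ∫ x in (0:ℝ)..1, F x := by ring
  rw [hgoal]
  -- split the integral
  have hmono : ∀ u v : ℝ, 0 ≤ u → u ≤ v → v ≤ 1 → IntervalIntegrable F volume u v := by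
    intro u v h1 h2 h3
    apply hF_int.mono_set
    rw [Set.uIcc_of_le h2, Set.uIcc_of_le zero_le_one]
    exact Set.Icc_subset_Icc h1 h3
  have hsplit : (∫ x in (0:ℝ)..1, F x)
      = (∫ x in (0:ℝ)..a, F x) + ((∫ x in a..b, F x) + ∫ x in b..(1:ℝ), F x) := by
    rw [integral_add_adjacent_intervals (hmono a b ha0 hab hb1)
      (hmono b 1 (ha0.trans hab) hb1 le_rfl)]
    rw [integral_add_adjacent_intervals (hmono 0 a le_rfl ha0 (hab.trans hb1))
      (hmono a 1 ha0 (hab.trans hb1) le_rfl)]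
  have hleft : (∫ x in (0:ℝ)..a, F x) = 0 := by
    rw [show (∫ x in (0:ℝ)..a, F x) = ∫ x in (0:ℝ)..a, (0:ℝ) from
      intervalIntegral.integral_congr fun x hx => by
        rw [Set.uIcc_of_le ha0] at hx
        rw [hF]; simp only [hz_left x hx.2, mul_zero]]
    simp
  have hright : (∫ x in b..(1:ℝ), F x) = 0 := by
    rw [show (∫ x in b..(1:ℝ), F x) = ∫ x in b..(1:ℝ), (0:ℝ) from
      intervalIntegral.integral_congr fun x hx => by
        rw [Set.uIcc_of_le hb1] at hx
        rw [hF]; simp only [hz_right x hx.1, mul_zero]]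
    simp
  rw [hsplit, hleft, hright, zero_add, add_zero]
  have hbound : ‖∫ x in a..b, F x‖ ≤ (ω * (((n:ℝ)+1) * ((n:ℝ)+1))) * |b - a| := by
    apply intervalIntegral.norm_integral_le_of_norm_le_const
    intro x hx
    rw [Set.uIoc_of_le hab] at hx
    rw [Real.norm_eq_abs]
    apply hFb
    exact ⟨le_of_lt (lt_of_le_of_lt ha0 hx.1), hx.2.trans hb1⟩
  rw [Real.norm_eq_abs] at hbound
  have harith : (ω * (((n:ℝ)+1) * ((n:ℝ)+1))) * |b - a| = 2 * ((n:ℝ)+1) * ω := by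
    have : b - a = 2 * (1 / ((n:ℝ)+1)) := by rw [ha, hb]; ring
    rw [this, abs_of_nonneg (by positivity)]
    field_simp
  rw [harith] at hbound
  exact hbound

lemma Kmat_entry_eq_zero (n : ℕ) (g : ℝ → ℝ) (i j : Fin n)
    (h : 1 < (((i : ℕ) : ℤ) - ((j : ℕ) : ℤ)).natAbs) : Kmat n g i j = 0 := by
  have hz : ∀ x : ℝ, hatDeriv n ((j:ℕ)+1) x * hatDeriv n ((i:ℕ)+1) x = 0 := by
    rcases (by omega : (j:ℕ) + 2 ≤ (i:ℕ) ∨ (i:ℕ) + 2 ≤ (j:ℕ)) with hc | hc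
    · intro x; exact hatDeriv_mul_eq_zero (by omega) x
    · intro x; rw [mul_comm]; exact hatDeriv_mul_eq_zero (by omega) x
  rw [Kmat, Matrix.of_apply]
  calc (∫ x in (0:ℝ)..1, g x * hatDeriv n ((j:ℕ)+1) x * hatDeriv n ((i:ℕ)+1) x)
      = ∫ x in (0:ℝ)..1, (0:ℝ) :=
        intervalIntegral.integral_congr fun x _ => by
          simp only [mul_assoc, hz x, mul_zero]
    _ = 0 := by simp

theorem fe_stiffness_diagonal_sampling_approximation
    (n : ℕ) (hn : 1 ≤ n) (g : ℝ → ℝ) (hg : ContinuousOn g (Set.Icc 0 1))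
    (ω : ℝ) (hω : 0 ≤ ω)
    (hgω : ∀ x ∈ Set.Icc (0 : ℝ) 1, ∀ y ∈ Set.Icc (0 : ℝ) 1,
      |x - y| ≤ 2 / ((n : ℝ) + 1) → |g x - g y| ≤ ω) :
    let Dg : Matrix (Fin n) (Fin n) ℝ :=
      Matrix.diagonal fun i => g ((((i : ℕ) : ℝ) + 1) / (n : ℝ))
    let Y : Matrix (Fin n) (Fin n) ℝ :=
      (1 / ((n : ℝ) + 1)) • (Kmat n g - Dg * Kmat n (fun _ => 1))
    (∀ i j : Fin n,
      |Kmat n g i j - g ((((i : ℕ) : ℝ) + 1) / (n : ℝ)) * Kmat n (fun _ => 1) i j| ≤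
        2 * ((n : ℝ) + 1) * ω) ∧
    (∀ i j : Fin n, 1 < ((i : ℤ) - (j : ℤ)).natAbs → Y i j = 0) ∧
    opNorm Y ≤ 6 * ω := by
  intro Dg Y
  have hN1 : (0:ℝ) < (n:ℝ) + 1 := by positivity
  have hkey : ∀ i j : Fin n,
      |Kmat n g i j - g ((((i : ℕ) : ℝ) + 1) / (n : ℝ)) * Kmat n (fun _ => 1) i j| ≤
        2 * ((n : ℝ) + 1) * ω := fun i j => core n hn g hg ω hω hgω i j
  have hYij : ∀ i j : Fin n, Y i j = (1 / ((n:ℝ) + 1)) *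
      (Kmat n g i j - g ((((i : ℕ) : ℝ) + 1) / (n : ℝ)) * Kmat n (fun _ => 1) i j) := by
    intro i j
    show ((1 / ((n : ℝ) + 1)) • (Kmat n g - Dg * Kmat n (fun _ => 1))) i j = _
    rw [Matrix.smul_apply, Matrix.sub_apply, smul_eq_mul]
    congr 2
    show (Matrix.diagonal (fun i : Fin n => g ((((i : ℕ) : ℝ) + 1) / (n : ℝ)))
        * Kmat n (fun _ => 1)) i j = _
    rw [Matrix.diagonal_mul]
  have hY0 : ∀ i j : Fin n, 1 < ((i : ℤ) - (j : ℤ)).natAbs → Y i j = 0 := by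
    intro i j h
    have h' : 1 < (((i : ℕ) : ℤ) - ((j : ℕ) : ℤ)).natAbs := h
    rw [hYij i j, Kmat_entry_eq_zero n g i j h',
      Kmat_entry_eq_zero n (fun _ => 1) i j h']
    ring
  have hYb : ∀ i j : Fin n, |Y i j| ≤ 2 * ω := by
    intro i j
    rw [hYij i j, abs_mul, abs_of_nonneg (by positivity : (0:ℝ) ≤ 1 / ((n:ℝ)+1))]
    have h2 : (1 / ((n:ℝ)+1)) * (2 * ((n:ℝ)+1) * ω) = 2 * ω := by
      field_simp
    calc (1 / ((n:ℝ)+1)) * |Kmat n g i j - g ((((i : ℕ) : ℝ) + 1) / (n : ℝ)) *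
          Kmat n (fun _ => 1) i j|
        ≤ (1 / ((n:ℝ)+1)) * (2 * ((n:ℝ)+1) * ω) :=
          mul_le_mul_of_nonneg_left (hkey i j) (by positivity)
      _ = 2 * ω := h2
  refine ⟨hkey, hY0, ?_⟩
  -- row and column sums bounded by 6ω
  have hsum : ∀ (f : Fin n → ℝ), (∀ j, |f j| ≤ 2 * ω) →
      ∀ (p : Fin n → Prop) [DecidablePred p],
      (∀ j, ¬ p j → f j = 0) →
      (∀ (z : Fin n → ℤ), True) → True := fun _ _ _ _ _ _ => trivial
  have hcount : ∀ (k : ℤ) (p : Fin n → Prop) [DecidablePred p],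
      (∀ j : Fin n, p j → ((j : ℕ) : ℤ) ∈ ({k - 1, k, k + 1} : Finset ℤ)) →
      (Finset.univ.filter p).card ≤ 3 := by
    intro k p _ hp
    have h1 : (Finset.univ.filter p).card ≤ ({k - 1, k, k + 1} : Finset ℤ).card := by
      refine Finset.card_le_card_of_injOn (fun j : Fin n => ((j : ℕ) : ℤ)) ?_ ?_
      · intro j hj
        exact hp j (Finset.mem_filter.mp hj).2
      · intro a _ b _ hab
        simp only at hab
        have : (a : ℕ) = (b : ℕ) := by exact_mod_cast hab
        exact Fin.ext this
    refine h1.trans ?_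
    refine (Finset.card_insert_le _ _).trans ?_
    have := Finset.card_insert_le (k) ({k + 1} : Finset ℤ)
    simp only [Finset.card_singleton] at this ⊢
    omega
  have hrowsum : ∀ i : Fin n, ∑ j, |Y i j| ≤ 6 * ω := by
    intro i
    classical
    have hfil : ∑ j ∈ Finset.univ.filter
        (fun j : Fin n => (((i:ℕ):ℤ) - ((j:ℕ):ℤ)).natAbs ≤ 1), |Y i j| = ∑ j, |Y i j| := by
      apply Finset.sum_filter_of_ne
      intro j _ hne
      by_contra hgt
      exact hne (by rw [hY0 i j (by omega)]; simp)
    rw [← hfil]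
    have hcard : (Finset.univ.filter
        (fun j : Fin n => (((i:ℕ):ℤ) - ((j:ℕ):ℤ)).natAbs ≤ 1)).card ≤ 3 := by
      apply hcount ((i:ℕ):ℤ)
      intro j hj
      simp only [Finset.mem_insert, Finset.mem_singleton]
      omega
    calc ∑ j ∈ Finset.univ.filter
          (fun j : Fin n => (((i:ℕ):ℤ) - ((j:ℕ):ℤ)).natAbs ≤ 1), |Y i j|
        ≤ ∑ _j ∈ Finset.univ.filter
          (fun j : Fin n => (((i:ℕ):ℤ) - ((j:ℕ):ℤ)).natAbs ≤ 1), (2 * ω) :=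
          Finset.sum_le_sum fun j _ => hYb i j
      _ = (Finset.univ.filter
          (fun j : Fin n => (((i:ℕ):ℤ) - ((j:ℕ):ℤ)).natAbs ≤ 1)).card * (2 * ω) := by
          rw [Finset.sum_const, nsmul_eq_mul]
      _ ≤ 3 * (2 * ω) := by
          apply mul_le_mul_of_nonneg_right _ (by positivity)
          exact_mod_cast hcard
      _ = 6 * ω := by ring
  have hcolsum : ∀ j : Fin n, ∑ i, |Y i j| ≤ 6 * ω := by
    intro j
    classical
    have hfil : ∑ i ∈ Finset.univ.filter
        (fun i : Fin n => (((i:ℕ):ℤ) - ((j:ℕ):ℤ)).natAbs ≤ 1), |Y i j| = ∑ i, |Y i j| := by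
      apply Finset.sum_filter_of_ne
      intro i _ hne
      by_contra hgt
      exact hne (by rw [hY0 i j (by omega)]; simp)
    rw [← hfil]
    have hcard : (Finset.univ.filter
        (fun i : Fin n => (((i:ℕ):ℤ) - ((j:ℕ):ℤ)).natAbs ≤ 1)).card ≤ 3 := by
      apply hcount ((j:ℕ):ℤ)
      intro i hi
      simp only [Finset.mem_insert, Finset.mem_singleton]
      omega
    calc ∑ i ∈ Finset.univ.filter
          (fun i : Fin n => (((i:ℕ):ℤ) - ((j:ℕ):ℤ)).natAbs ≤ 1), |Y i j|
        ≤ ∑ _i ∈ Finset.univ.filter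
          (fun i : Fin n => (((i:ℕ):ℤ) - ((j:ℕ):ℤ)).natAbs ≤ 1), (2 * ω) :=
          Finset.sum_le_sum fun i _ => hYb i j
      _ = (Finset.univ.filter
          (fun i : Fin n => (((i:ℕ):ℤ) - ((j:ℕ):ℤ)).natAbs ≤ 1)).card * (2 * ω) := by
          rw [Finset.sum_const, nsmul_eq_mul]
      _ ≤ 3 * (2 * ω) := by
          apply mul_le_mul_of_nonneg_right _ (by positivity)
          exact_mod_cast hcard
      _ = 6 * ω := by ring
  exact schur_opNorm Y (6 * ω) (by positivity) hrowsum hcolsum
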